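/- Let D and K be positive semidefinite n×n real symmetric matrices. Then 0 ≤ Tr[D + K − √(D² + 2 D^{1/2} K D^{1/2})] ≤ Tr K. -/

import Mathlib

open Matrix

section aux
variable {n : Type*} [Fintype n] [DecidableEq n]

lemma psd_diag_nonneg {M : Matrix n n ℝ} (hM : M.PosSemidef) (i : n) : 0 ≤ M i i := by
  have := hM.dotProduct_mulVec_nonneg (Pi.single i 1)
  simpa [dotProduct, mulVec, Pi.single_apply, Finset.sum_ite_eq] using this

lemma sq_diag_le {M : Matrix n n ℝ} (hM : M.IsHermitian) (i : n) :
    (M i i) ^ 2 ≤ (M * M) i i := by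
  have hsym : ∀ j, M j i = M i j := fun j => by
    conv_lhs => rw [← hM]
    simp [conjTranspose_apply]
  have : (M * M) i i = ∑ j, M i j ^ 2 := by
    simp [Matrix.mul_apply, hsym, sq]
  rw [this]
  exact Finset.single_le_sum (f := fun j => M i j ^ 2) (fun j _ => sq_nonneg _)
    (Finset.mem_univ i)

lemma conj_mul_conj {V M N : Matrix n n ℝ} (hVr : V * star V = 1) :
    (star V * M * V) * (star V * N * V) = star V * (M * N) * V := by
  have hc : ∀ X : Matrix n n ℝ, V * (star V * X) = X := fun X => by
    rw [← mul_assoc, hVr, one_mul]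
  simp only [mul_assoc, hc]

lemma conj_trace {V M : Matrix n n ℝ} (hVr : V * star V = 1) :
    (star V * M * V).trace = M.trace := by
  rw [Matrix.trace_mul_cycle, hVr, one_mul]

lemma conj_psd {V M : Matrix n n ℝ} (hM : M.PosSemidef) :
    (star V * M * V).PosSemidef := by
  simpa [star_eq_conjTranspose] using hM.conjTranspose_mul_mul_same V

/-- If `A, B` are PSD and `B*B ≤ A*A`, then `Tr B ≤ Tr A`. -/
lemma trace_le_of_sq_le {A B : Matrix n n ℝ} (hA : A.PosSemidef) (hB : B.PosSemidef)
    (h : (A * A - B * B).PosSemidef) : B.trace ≤ A.trace := by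
  set V : Matrix n n ℝ := (hA.1.eigenvectorUnitary : Matrix n n ℝ) with hVdef
  have hVr : V * star V = 1 := mem_unitaryGroup_iff.mp hA.1.eigenvectorUnitary.2
  have hVl : star V * V = 1 := mem_unitaryGroup_iff'.mp hA.1.eigenvectorUnitary.2
  set e := hA.1.eigenvalues with he
  have hAe : star V * A * V = diagonal e := by
    conv_lhs => rw [hA.1.spectral_theorem, Unitary.conjStarAlgAut_apply]
    have : (RCLike.ofReal ∘ hA.1.eigenvalues : n → ℝ) = e := by
      rw [RCLike.ofReal_real_eq_id]; rfl
    rw [this, ← hVdef, ← mul_assoc, ← mul_assoc, hVl, one_mul, mul_assoc, hVl, mul_one]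
  set B' := star V * B * V with hB'def
  have hB' : B'.PosSemidef := conj_psd hB
  have hkey : (diagonal e * diagonal e - B' * B').PosSemidef := by
    have h2 : (star V * (A * A - B * B) * V).PosSemidef := conj_psd h
    have h3 : star V * (A * A - B * B) * V = diagonal e * diagonal e - B' * B' := by
      rw [mul_sub, sub_mul, ← conj_mul_conj hVr, ← conj_mul_conj hVr, hAe, hB'def]
    rwa [h3] at h2
  have hdiag : ∀ i, B' i i ≤ e i := by
    intro i
    have h1 : (B' i i) ^ 2 ≤ (B' * B') i i := sq_diag_le hB'.1 i
    have h2 : (B' * B') i i ≤ (diagonal e * diagonal e) i i := by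
      have := psd_diag_nonneg hkey i
      simp only [Matrix.sub_apply] at this
      linarith
    have h3 : (diagonal e * diagonal e) i i = e i ^ 2 := by
      rw [diagonal_mul_diagonal]; simp [sq]
    have hb : 0 ≤ B' i i := psd_diag_nonneg hB' i
    have hei : 0 ≤ e i := hA.eigenvalues_nonneg i
    nlinarith [h1, h2, h3, hb, hei]
  calc B.trace = B'.trace := (conj_trace hVr).symm
    _ = ∑ i, B' i i := rfl
    _ ≤ ∑ i, e i := Finset.sum_le_sum fun i _ => hdiag i
    _ = (diagonal e).trace := by simp [Matrix.trace, Matrix.diag]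
    _ = A.trace := by rw [← hAe, conj_trace hVr]

end aux

/-- Finite-dimensional model of the Bogoliubov energy: for positive semidefinite real
symmetric matrices `D`, `K`, with `D^{1/2}` the positive square root of `D` and `S` the
positive square root of `D² + 2 D^{1/2} K D^{1/2}`, one has
`0 ≤ Tr[D + K − S] ≤ Tr K`. -/
theorem bogoliubov_energy_trace_bounds
    {n : Type*} [Fintype n] [DecidableEq n]
    (D K Dh S : Matrix n n ℝ)
    (hD : D.PosSemidef) (hK : K.PosSemidef)
    (hDh : Dh.PosSemidef) (hDh2 : Dh * Dh = D)
    (hS : S.PosSemidef) (hS2 : S * S = D * D + 2 • (Dh * K * Dh)) :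
    0 ≤ (D + K - S).trace ∧ (D + K - S).trace ≤ K.trace := by
  have hDKDh : (Dh * K * Dh).PosSemidef := by
    have := hK.mul_mul_conjTranspose_same Dh
    rwa [hDh.1.eq] at this
  constructor
  · -- trace S ≤ trace D + trace K
    set V : Matrix n n ℝ := (hD.1.eigenvectorUnitary : Matrix n n ℝ) with hVdef
    have hVr : V * star V = 1 := mem_unitaryGroup_iff.mp hD.1.eigenvectorUnitary.2
    have hVl : star V * V = 1 := mem_unitaryGroup_iff'.mp hD.1.eigenvectorUnitary.2
    set e := hD.1.eigenvalues with he
    have hDe : star V * D * V = diagonal e := by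
      conv_lhs => rw [hD.1.spectral_theorem, Unitary.conjStarAlgAut_apply]
      have : (RCLike.ofReal ∘ hD.1.eigenvalues : n → ℝ) = e := by
        rw [RCLike.ofReal_real_eq_id]; rfl
      rw [this, ← hVdef, ← mul_assoc, ← mul_assoc, hVl, one_mul, mul_assoc, hVl, mul_one]
    set K' := star V * K * V with hK'def
    have hK' : K'.PosSemidef := conj_psd hK
    set S' := star V * S * V with hS'def
    have hS' : S'.PosSemidef := conj_psd hS
    -- the conjugated Dh is the diagonal sqrt
    have hDh' : (star V * Dh * V).PosSemidef := conj_psd hDh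
    have hsd : (diagonal (fun i => Real.sqrt (e i))).PosSemidef :=
      posSemidef_diagonal_iff.mpr fun i => Real.sqrt_nonneg _
    have hDh'eq : star V * Dh * V = diagonal (fun i => Real.sqrt (e i)) := by
      open MatrixOrder in apply (CFC.sq_eq_sq_iff (A := Matrix n n ℝ) _ _ hDh'.nonneg hsd.nonneg).mp
      rw [pow_two, pow_two, conj_mul_conj hVr, hDh2, hDe, diagonal_mul_diagonal]
      exact congrArg Matrix.diagonal
        (funext fun i => (Real.mul_self_sqrt (hD.eigenvalues_nonneg i)).symm)
    have hS'2 : S' * S' = diagonal e * diagonal e +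
        2 • (diagonal (fun i => Real.sqrt (e i)) * K' * diagonal (fun i => Real.sqrt (e i))) := by
      rw [hS'def, conj_mul_conj hVr, hS2, mul_add, add_mul, mul_smul_comm, smul_mul_assoc]
      congr 1
      · rw [← conj_mul_conj hVr, hDe]
      · congr 1
        have key : star V * (Dh * (K * Dh)) * V =
            (star V * Dh * V) * ((star V * K * V) * (star V * Dh * V)) := by
          rw [conj_mul_conj hVr, conj_mul_conj hVr]
        rw [show Dh * K * Dh = Dh * (K * Dh) by rw [mul_assoc], key, hDh'eq, hK'def]
        simp only [mul_assoc]
    have hdiag : ∀ i, S' i i ≤ e i + K' i i := by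
      intro i
      have h1 : (S' i i) ^ 2 ≤ (S' * S') i i := sq_diag_le hS'.1 i
      have h2 : (S' * S') i i =
          e i * e i + 2 * (Real.sqrt (e i) * K' i i * Real.sqrt (e i)) := by
        have hdk : ((diagonal fun i => Real.sqrt (e i)) * K' *
            (diagonal fun i => Real.sqrt (e i))) i i =
            Real.sqrt (e i) * K' i i * Real.sqrt (e i) := by
          rw [Matrix.mul_diagonal, Matrix.diagonal_mul]
        rw [hS'2, Matrix.add_apply, Matrix.smul_apply, hdk, diagonal_mul_diagonal,
          Matrix.diagonal_apply_eq, nsmul_eq_mul]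
        push_cast
        ring
      have hKi : 0 ≤ K' i i := psd_diag_nonneg hK' i
      have hei : 0 ≤ e i := hD.eigenvalues_nonneg i
      have hSi : 0 ≤ S' i i := psd_diag_nonneg hS' i
      have hss : Real.sqrt (e i) * Real.sqrt (e i) = e i := Real.mul_self_sqrt hei
      nlinarith [h1, h2, hKi, hei, hSi, hss, sq_nonneg (K' i i)]
    have htr : S.trace ≤ D.trace + K.trace := by
      have t1 : S.trace = ∑ i, S' i i := by rw [← conj_trace (M := S) hVr]; rfl
      have t2 : D.trace = ∑ i, e i := by
        rw [← conj_trace (M := D) hVr, hDe]; simp [Matrix.trace, Matrix.diag]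
      have t3 : K.trace = ∑ i, K' i i := by rw [← conj_trace (M := K) hVr]; rfl
      rw [t1, t2, t3, ← Finset.sum_add_distrib]
      exact Finset.sum_le_sum fun i _ => hdiag i
    rw [Matrix.trace_sub, Matrix.trace_add]
    linarith
  · -- trace D ≤ trace S
    have hDS : D.trace ≤ S.trace := by
      apply trace_le_of_sq_le hS hD
      rw [hS2]
      have : D * D + 2 • (Dh * K * Dh) - D * D = 2 • (Dh * K * Dh) := by abel
      rw [this, two_smul]
      exact hDKDh.add hDKDh
    rw [Matrix.trace_sub, Matrix.trace_add]
    linarith
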